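/- Let (X,Σ,μ) be a probability space with an ergodic aperiodic (invertible or not) measure preserving transformation θ on a Lebesgue space, and Tf = f∘θ. Then there exists 0 ≤ h ∈ L¹(μ) such that for every 0<r<1, limsup_n T^n h / n^r = ∞ μ-a.e. -/

import Mathlib

open MeasureTheory Filter Topology ENNReal Set

section AuxA
variable {X : Type*} [MeasurableSpace X]

/-- If the preimages `θ^[i] ⁻¹' A` for `i < N` are pairwise disjoint, then `N * μ A ≤ 1`. -/
lemma aux_measure_le (μ : Measure X) [IsProbabilityMeasure μ] {θ : X → X}
    (hθ : MeasurePreserving θ μ μ) {A : Set X} (hA : MeasurableSet A) {N : ℕ}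
    (hd : ∀ i j, i < N → j < N → i ≠ j → Disjoint ((θ^[i]) ⁻¹' A) ((θ^[j]) ⁻¹' A)) :
    (N : ℝ≥0∞) * μ A ≤ 1 := by
  have hmeas : ∀ i : ℕ, MeasurableSet ((θ^[i]) ⁻¹' A) := fun i =>
    (hθ.iterate i).measurable hA
  have hsum : ∑ i ∈ Finset.range N, μ ((θ^[i]) ⁻¹' A)
      = μ (⋃ i ∈ Finset.range N, (θ^[i]) ⁻¹' A) := by
    refine (measure_biUnion_finset ?_ fun i _ => hmeas i).symm
    intro i hi j hj hij
    exact hd i j (Finset.mem_range.1 hi) (Finset.mem_range.1 hj) hij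
  have heq : ∀ i : ℕ, μ ((θ^[i]) ⁻¹' A) = μ A := fun i =>
    (hθ.iterate i).measure_preimage hA.nullMeasurableSet
  calc (N : ℝ≥0∞) * μ A = ∑ i ∈ Finset.range N, μ ((θ^[i]) ⁻¹' A) := by
        simp [heq, Finset.sum_const, nsmul_eq_mul]
    _ = μ (⋃ i ∈ Finset.range N, (θ^[i]) ⁻¹' A) := hsum
    _ ≤ 1 := prob_le_one

lemma aux_tower (μ : Measure X) [IsProbabilityMeasure μ] {θ : X → X}
    (hθ : MeasurePreserving θ μ μ) (herg : Ergodic θ μ)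
    {A : Set X} (hA : MeasurableSet A) (hA0 : 0 < μ A) (N : ℕ) (hN : 1 ≤ N) :
    ∃ B : Set X, MeasurableSet B ∧ (N : ℝ≥0∞) * μ B ≤ 1 ∧
      μ {x | ¬ ∃ n, 1 ≤ n ∧ n ≤ N ∧ θ^[n] x ∈ B} ≤ N * μ A := by
  classical
  set C : ℕ → Set X := fun m => {x | θ^[m] x ∈ A ∧ ∀ l, 1 ≤ l → l < m → θ^[l] x ∉ A} with hC
  have hCmeas : ∀ m, MeasurableSet (C m) := by
    intro m
    have heq : C m = ((θ^[m]) ⁻¹' A) ∩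
        ⋂ (l : ℕ), ⋂ (_ : 1 ≤ l), ⋂ (_ : l < m), (θ^[l]) ⁻¹' Aᶜ := by
      ext x
      simp only [hC, mem_setOf_eq, mem_inter_iff, mem_preimage, mem_iInter, mem_compl_iff]
    rw [heq]
    exact ((hθ.iterate m).measurable hA).inter
      (MeasurableSet.iInter fun l => MeasurableSet.iInter fun _ =>
        MeasurableSet.iInter fun _ => (hθ.iterate l).measurable hA.compl)
  have hshift : ∀ m d x, x ∈ C m → d < m → θ^[d] x ∈ C (m - d) := by
    intro m d x hx hd
    constructor
    · rw [← Function.iterate_add_apply, (by omega : m - d + d = m)]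
      exact hx.1
    · intro l hl1 hl2
      rw [← Function.iterate_add_apply]
      exact hx.2 (l + d) (by omega) (by omega)
  have hCdisj : ∀ m m', 1 ≤ m → m < m' → ∀ x, x ∈ C m → x ∉ C m' := by
    intro m m' h1 hmm x hxm hxm'
    exact hxm'.2 m h1 hmm hxm.1
  set B : Set X := ⋃ j : ℕ, C ((j + 1) * N) with hB
  have hBmeas : MeasurableSet B := MeasurableSet.iUnion fun j => hCmeas _
  have hdisj : ∀ i j, i < N → j < N → i ≠ j →
      Disjoint ((θ^[i]) ⁻¹' B) ((θ^[j]) ⁻¹' B) := by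
    have key : ∀ i j, i < j → j < N →
        Disjoint ((θ^[i]) ⁻¹' B) ((θ^[j]) ⁻¹' B) := by
      intro i j hij hjN
      rw [Set.disjoint_left]
      intro x hxi hxj
      obtain ⟨a, ha⟩ := mem_iUnion.1 hxi
      obtain ⟨b, hb⟩ := mem_iUnion.1 hxj
      have haN : N ≤ (a + 1) * N := Nat.le_mul_of_pos_left N (Nat.succ_pos a)
      have hbN : N ≤ (b + 1) * N := Nat.le_mul_of_pos_left N (Nat.succ_pos b)
      have hd3 : j - i < (a + 1) * N := by omega
      have hmem : θ^[j] x ∈ C ((a + 1) * N - (j - i)) := by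
        have h2 := hshift _ (j - i) _ ha hd3
        rw [← Function.iterate_add_apply, (by omega : j - i + i = j)] at h2
        exact h2
      set u := (a + 1) * N - (j - i) with hu
      set v := (b + 1) * N with hv
      have hu1 : 1 ≤ u := by omega
      have hv1 : 1 ≤ v := by omega
      rcases lt_trichotomy u v with h | h | h
      · exact hCdisj u v hu1 h _ hmem hb
      · -- u = v leads to divisibility contradiction
        have hle' : j - i ≤ (a + 1) * N := le_of_lt hd3
        have heqn : (a + 1) * N = (b + 1) * N + (j - i) := by omega
        rcases le_or_gt a b with hab | hab
        · have : (a + 1) * N ≤ (b + 1) * N := Nat.mul_le_mul_right _ (by omega)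
          omega
        · have hd6 : (a - b) * N + (b + 1) * N = (a + 1) * N := by
            rw [← Nat.add_mul]
            congr 1
            omega
          have : N ≤ (a - b) * N := Nat.le_mul_of_pos_left N (by omega)
          omega
      · exact hCdisj v u hv1 h _ hb hmem
    intro i j hiN hjN hij
    rcases lt_or_gt_of_ne hij with h | h
    · exact key i j h hjN
    · exact (key j i h hiN).symm
  have hBle : (N : ℝ≥0∞) * μ B ≤ 1 := aux_measure_le μ hθ hBmeas hdisj
  -- sweeping set
  set V : Set X := ⋃ n : ℕ, (θ^[n]) ⁻¹' A with hV
  have hVmeas : MeasurableSet V := MeasurableSet.iUnion fun n => (hθ.iterate n).measurable hA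
  have hpre : θ ⁻¹' V ⊆ V := by
    intro x hx
    rw [mem_preimage] at hx
    obtain ⟨n, hn⟩ := mem_iUnion.1 hx
    rw [mem_preimage, ← Function.iterate_succ_apply] at hn
    exact mem_iUnion.2 ⟨n + 1, hn⟩
  have hV1 : μ V = 1 := by
    rcases herg.ae_empty_or_univ_of_preimage_ae_le hVmeas.nullMeasurableSet
        (HasSubset.Subset.eventuallyLE hpre) with h | h
    · exfalso
      have h1 : μ V = 0 := by rw [measure_congr h]; simp
      have h2 : μ A ≤ μ V := measure_mono fun x hx => mem_iUnion.2 ⟨0, by simpa using hx⟩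
      rw [h1] at h2
      exact absurd (le_antisymm h2 zero_le) (ne_of_gt hA0)
    · rw [measure_congr h]; simp
  have hGm : μ (θ ⁻¹' V) = 1 := by
    rw [hθ.measure_preimage hVmeas.nullMeasurableSet]; exact hV1
  have hcover : {x | ¬ ∃ n, 1 ≤ n ∧ n ≤ N ∧ θ^[n] x ∈ B} ⊆
      (θ ⁻¹' V)ᶜ ∪ ⋃ t ∈ Finset.Icc 1 N, (θ^[t]) ⁻¹' A := by
    intro x hx
    by_cases hxG : x ∈ θ ⁻¹' V
    case neg => exact Or.inl hxG
    right
    have hex : ∃ n : ℕ, θ^[n + 1] x ∈ A := by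
      rw [mem_preimage] at hxG
      obtain ⟨n, hn⟩ := mem_iUnion.1 hxG
      rw [mem_preimage, ← Function.iterate_succ_apply] at hn
      exact ⟨n, hn⟩
    set t := Nat.find hex + 1 with ht
    have htA : θ^[t] x ∈ A := Nat.find_spec hex
    have htmin : ∀ l, 1 ≤ l → l < t → θ^[l] x ∉ A := by
      intro l h1 h2
      have h3 := Nat.find_min hex (m := l - 1) (by omega)
      rw [(by omega : l - 1 + 1 = l)] at h3
      exact h3
    have hxC : x ∈ C t := ⟨htA, htmin⟩
    by_cases hts : t ≤ N
    · exact mem_biUnion (Finset.mem_Icc.2 ⟨by omega, hts⟩) htA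
    · exfalso
      apply hx
      set n := (t - 1) % N + 1 with hn
      have hmod := Nat.div_add_mod (t - 1) N
      have hmlt : (t - 1) % N < N := Nat.mod_lt _ (by omega)
      have hn1 : 1 ≤ n := by omega
      have hnN : n ≤ N := by omega
      have hnt : n < t := by omega
      have hmemC : θ^[n] x ∈ C (t - n) := hshift t n x hxC hnt
      set q := (t - 1) / N with hq
      have hq1 : 1 ≤ q := (Nat.one_le_div_iff (by omega)).2 (by omega)
      have htn : t - n = N * q := by omega
      refine ⟨n, hn1, hnN, mem_iUnion.2 ⟨q - 1, ?_⟩⟩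
      have hrw : (q - 1 + 1) * N = t - n := by
        rw [(by omega : q - 1 + 1 = q), Nat.mul_comm]
        omega
      rw [hrw]
      exact hmemC
  refine ⟨B, hBmeas, hBle, ?_⟩
  calc μ {x | ¬ ∃ n, 1 ≤ n ∧ n ≤ N ∧ θ^[n] x ∈ B}
      ≤ μ ((θ ⁻¹' V)ᶜ ∪ ⋃ t ∈ Finset.Icc 1 N, (θ^[t]) ⁻¹' A) := measure_mono hcover
    _ ≤ μ (θ ⁻¹' V)ᶜ + μ (⋃ t ∈ Finset.Icc 1 N, (θ^[t]) ⁻¹' A) := measure_union_le _ _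
    _ ≤ 0 + ∑ t ∈ Finset.Icc 1 N, μ ((θ^[t]) ⁻¹' A) := by
        refine add_le_add ?_ (measure_biUnion_finset_le _ _)
        have : μ (θ ⁻¹' V)ᶜ = 0 := by
          rw [measure_compl (hθ.measurable hVmeas) (measure_ne_top μ _), hGm]
          simp
        rw [this]
    _ = N * μ A := by
        have : ∀ t ∈ Finset.Icc 1 N, μ ((θ^[t]) ⁻¹' A) = μ A := fun t _ =>
          (hθ.iterate t).measure_preimage hA.nullMeasurableSet
        rw [Finset.sum_congr rfl this, Finset.sum_const, Nat.card_Icc]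
        simp [nsmul_eq_mul]
end AuxA

section AuxB
variable {X : Type*} [MeasurableSpace X] [StandardBorelSpace X]

/-- In an aperiodic system on a standard Borel probability space, for every `N` there is a
positive measure set whose first `N` preimages are pairwise disjoint. -/
lemma aux_exists_disjoint (μ : Measure X) [IsProbabilityMeasure μ] {θ : X → X}
    (hθ : MeasurePreserving θ μ μ)
    (haper : μ {x | ∃ n : ℕ, 0 < n ∧ θ^[n] x = x} = 0) (N : ℕ) :
    ∃ A : Set X, MeasurableSet A ∧ 0 < μ A ∧
      ∀ i j, i < N → j < N → i ≠ j → Disjoint ((θ^[i]) ⁻¹' A) ((θ^[j]) ⁻¹' A) := by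
  obtain ⟨g, hg⟩ := exists_measurableEmbedding_real X
  -- periodic points with a fixed period are a measurable null set
  have hPn : ∀ n : ℕ, MeasurableSet {x | θ^[n] x = x} := by
    intro n
    have : {x | θ^[n] x = x} = (fun x => g (θ^[n] x) - g x) ⁻¹' {0} := by
      ext x
      simp only [mem_preimage, mem_singleton_iff, mem_setOf_eq, sub_eq_zero]
      exact ⟨fun h => by rw [h], fun h => hg.injective h⟩
    rw [this]
    exact ((hg.measurable.comp ((hθ.iterate n).measurable)).sub hg.measurable)
      (measurableSet_singleton 0)
  have hPn0 : ∀ n : ℕ, 0 < n → μ {x | θ^[n] x = x} = 0 := fun n hn =>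
    measure_mono_null (fun x (hx : θ^[n] x = x) =>
      show ∃ m : ℕ, 0 < m ∧ θ^[m] x = x from ⟨n, hn, hx⟩) haper
  -- the good set where the first N iterates are injective
  set G : Set X := {x | ∀ i j, i < N → j < N → i < j → θ^[i] x ≠ θ^[j] x} with hG
  have hGc : μ Gᶜ = 0 := by
    have hsub : Gᶜ ⊆ ⋃ i ∈ Finset.range N, ⋃ j ∈ Finset.range N,
        (θ^[i]) ⁻¹' {x | θ^[j - i] x = x} ∩ {x | 0 < j - i} := by
      intro x hx
      simp only [hG, mem_compl_iff, mem_setOf_eq, not_forall] at hx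
      obtain ⟨i, j, hiN, hjN, hij, hx⟩ := hx
      simp only [not_not] at hx
      refine mem_biUnion (Finset.mem_range.2 hiN) (mem_biUnion (Finset.mem_range.2 hjN) ?_)
      refine ⟨?_, by simp [Nat.sub_pos_of_lt hij]⟩
      simp only [mem_preimage, mem_setOf_eq]
      rw [← Function.iterate_add_apply, Nat.sub_add_cancel hij.le, ← hx]
    refine measure_mono_null hsub (measure_biUnion_null_iff (Finset.range N).countable_toSet
      |>.2 fun i _ => measure_biUnion_null_iff (Finset.range N).countable_toSet |>.2
      fun j _ => ?_)
    rcases Nat.eq_zero_or_pos (j - i) with h0 | hpos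
    · have hempty : {x : X | 0 < j - i} = ∅ := by
        ext x; simp only [mem_setOf_eq, mem_empty_iff_false, iff_false]; omega
      rw [hempty, Set.inter_empty, measure_empty]
    · refine measure_inter_null_of_null_left _ ?_
      rw [(hθ.iterate i).measure_preimage (hPn _).nullMeasurableSet]
      exact hPn0 _ hpos
  -- countable family of candidate sets indexed by rational intervals
  set F : ℚ × ℚ → Set X := fun pq =>
    {x | g x ∈ Ioo (pq.1 : ℝ) (pq.2 : ℝ) ∧
      ∀ j, 1 ≤ j → j < N → g (θ^[j] x) ∉ Ioo (pq.1 : ℝ) (pq.2 : ℝ)} with hF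
  have hFmeas : ∀ pq, MeasurableSet (F pq) := by
    intro pq
    have heq : F pq = (g ⁻¹' Ioo (pq.1 : ℝ) (pq.2 : ℝ)) ∩
        ⋂ (j : ℕ), ⋂ (_ : 1 ≤ j), ⋂ (_ : j < N),
          (fun x => g (θ^[j] x)) ⁻¹' (Ioo (pq.1 : ℝ) (pq.2 : ℝ))ᶜ := by
      ext x
      simp only [hF, mem_setOf_eq, mem_inter_iff, mem_preimage, mem_iInter, mem_compl_iff]
    rw [heq]
    refine (hg.measurable measurableSet_Ioo).inter ?_
    refine MeasurableSet.iInter fun j => MeasurableSet.iInter fun _ =>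
      MeasurableSet.iInter fun _ => ?_
    exact (hg.measurable.comp (hθ.iterate j).measurable) measurableSet_Ioo.compl
  have hcov : G ⊆ ⋃ pq, F pq := by
    intro x hx
    set S : Finset ℝ :=
      insert 1 ((Finset.Ico 1 N).image fun j => |g (θ^[j] x) - g x|) with hS
    have hSne : S.Nonempty := ⟨1, Finset.mem_insert_self _ _⟩
    set δ : ℝ := S.min' hSne with hδ
    have hδpos : 0 < δ := by
      have := S.min'_mem hSne
      rw [← hδ] at this
      rw [hS] at this
      rcases Finset.mem_insert.1 this with h | h
      · rw [h]; norm_num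
      · obtain ⟨j, hj, hjv⟩ := Finset.mem_image.1 h
        rw [Finset.mem_Ico] at hj
        have hne : θ^[j] x ≠ x := by
          have := hx 0 j (lt_of_le_of_lt (Nat.zero_le _) hj.2) hj.2
            (lt_of_lt_of_le Nat.zero_lt_one hj.1)
          simpa using this.symm
        rw [← hjv]
        exact abs_pos.2 (sub_ne_zero.2 fun h => hne (hg.injective h))
    obtain ⟨p, hp1, hp2⟩ := exists_rat_btwn (show g x - δ < g x by linarith)
    obtain ⟨q, hq1, hq2⟩ := exists_rat_btwn (show g x < g x + δ by linarith)
    refine mem_iUnion.2 ⟨(p, q), ⟨⟨hp2, hq1⟩, fun j hj1 hj2 hmem => ?_⟩⟩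
    have hle : δ ≤ |g (θ^[j] x) - g x| := by
      refine Finset.min'_le S _ ?_
      exact Finset.mem_insert_of_mem
        (Finset.mem_image.2 ⟨j, Finset.mem_Ico.2 ⟨hj1, hj2⟩, rfl⟩)
    obtain ⟨hm1, hm2⟩ := hmem
    have hm1' : (p : ℝ) < g (θ^[j] x) := hm1
    have hm2' : g (θ^[j] x) < (q : ℝ) := hm2
    have habs : |g (θ^[j] x) - g x| < δ := abs_lt.2 ⟨by linarith, by linarith⟩
    linarith
  have hex : ∃ pq, 0 < μ (F pq) := by
    by_contra hcon
    push_neg at hcon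
    have h0 : μ (⋃ pq, F pq) = 0 :=
      measure_iUnion_null fun pq => nonpos_iff_eq_zero.1 (hcon pq)
    have : (1 : ℝ≥0∞) ≤ 0 := by
      calc (1 : ℝ≥0∞) = μ univ := measure_univ.symm
        _ ≤ μ (Gᶜ ∪ ⋃ pq, F pq) := measure_mono fun x _ => by
            by_cases hxG : x ∈ G
            · exact Or.inr (hcov hxG)
            · exact Or.inl hxG
        _ ≤ μ Gᶜ + μ (⋃ pq, F pq) := measure_union_le _ _
        _ = 0 := by rw [hGc, h0, add_zero]
    exact absurd this (by norm_num)
  obtain ⟨pq, hpq⟩ := hex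
  refine ⟨F pq, hFmeas pq, hpq, ?_⟩
  have key : ∀ i j, i < j → j < N → Disjoint ((θ^[i]) ⁻¹' F pq) ((θ^[j]) ⁻¹' F pq) := by
    intro i j hij hjN
    rw [Set.disjoint_left]
    intro x hxi hxj
    simp only [mem_preimage, hF, mem_setOf_eq] at hxi hxj
    have hji : 1 ≤ j - i := by omega
    have hjiN : j - i < N := by omega
    have := hxi.2 (j - i) hji hjiN
    rw [← Function.iterate_add_apply, Nat.sub_add_cancel hij.le] at this
    exact this hxj.1
  intro i j hiN hjN hij
  rcases lt_or_gt_of_ne hij with h | h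
  · exact key i j h hjN
  · exact (key j i h hiN).symm
end AuxB

section AuxC
lemma aux_exists_small {Y : Type*} [MeasurableSpace Y] [StandardBorelSpace Y]
    (μ : Measure Y) [IsProbabilityMeasure μ] {θ : Y → Y}
    (hθ : MeasurePreserving θ μ μ)
    (haper : μ {x | ∃ n : ℕ, 0 < n ∧ θ^[n] x = x} = 0) {ε : ℝ≥0∞} (hε : ε ≠ 0) :
    ∃ A : Set Y, MeasurableSet A ∧ 0 < μ A ∧ μ A < ε := by
  obtain ⟨n, hn⟩ := ENNReal.exists_inv_nat_lt hε
  obtain ⟨A, hAm, hA0, hdis⟩ := aux_exists_disjoint μ hθ haper (n + 1)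
  refine ⟨A, hAm, hA0, ?_⟩
  have h1 := aux_measure_le μ hθ hAm hdis
  have h2 : μ A ≤ (((n : ℕ) : ℝ≥0∞) + 1)⁻¹ := by
    rw [ENNReal.le_inv_iff_mul_le, mul_comm]
    simpa [Nat.cast_add] using h1
  refine lt_of_le_of_lt (h2.trans ?_) hn
  exact ENNReal.inv_le_inv.2 (le_add_of_nonneg_right zero_le_one)
end AuxC

/-- For an ergodic aperiodic measure preserving transformation `θ` of a
Lebesgue probability space, there is `0 ≤ h ∈ L¹(μ)` such that for every `0 < r < 1`,
`limsup_n T^n h / n^r = ∞` a.e. -/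
theorem stmt6 {X : Type*} [MeasurableSpace X] [StandardBorelSpace X]
    (μ : Measure X) [IsProbabilityMeasure μ]
    (θ : X → X) (hθ : MeasurePreserving θ μ μ) (herg : Ergodic θ μ)
    (haper : μ {x | ∃ n : ℕ, 0 < n ∧ θ^[n] x = x} = 0) :
    ∃ h : X → ℝ, Measurable h ∧ (∀ x, 0 ≤ h x) ∧ Integrable h μ ∧
      ∀ r : ℝ, 0 < r → r < 1 →
        ∀ᵐ x ∂μ, Filter.limsup
          (fun n : ℕ => ENNReal.ofReal (h (θ^[n] x) / (n : ℝ) ^ r)) atTop = ⊤ := by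
  classical
  -- parameters
  set Nk : ℕ → ℕ := fun k => 2 ^ (k * k) with hNkdef
  set ck : ℕ → ℕ := fun k => 2 ^ (k * k - k) with hckdef
  have hNk0 : ∀ k, ((Nk k : ℕ) : ℝ≥0∞) ≠ 0 := fun k => by
    simp [hNkdef]
  have hNkt : ∀ k, ((Nk k : ℕ) : ℝ≥0∞) ≠ ⊤ := fun k => ENNReal.natCast_ne_top _
  -- small sets A k
  have hAex : ∀ k : ℕ, ∃ A : Set X, MeasurableSet A ∧ 0 < μ A ∧
      μ A < ((2 : ℝ≥0∞) ^ k * (Nk k : ℕ))⁻¹ := by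
    intro k
    refine aux_exists_small μ hθ haper ?_
    simp [ENNReal.inv_ne_zero, ENNReal.mul_ne_top, ENNReal.pow_ne_top, hNkt k]
  choose A hAm hA0 hAsm using hAex
  -- tower bases B k
  have hBex : ∀ k : ℕ, ∃ B : Set X, MeasurableSet B ∧ ((Nk k : ℕ) : ℝ≥0∞) * μ B ≤ 1 ∧
      μ {x | ¬ ∃ n, 1 ≤ n ∧ n ≤ Nk k ∧ θ^[n] x ∈ B} ≤ (Nk k : ℕ) * μ (A k) :=
    fun k => aux_tower μ hθ herg (hAm k) (hA0 k) (Nk k) Nat.one_le_two_pow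
  choose B hBm hBle hBcov using hBex
  have hcov2 : ∀ k, μ {x | ¬ ∃ n, 1 ≤ n ∧ n ≤ Nk k ∧ θ^[n] x ∈ B k} ≤ ((2 : ℝ≥0∞) ^ k)⁻¹ := by
    intro k
    refine (hBcov k).trans ?_
    calc ((Nk k : ℕ) : ℝ≥0∞) * μ (A k)
        ≤ ((Nk k : ℕ) : ℝ≥0∞) * ((2 : ℝ≥0∞) ^ k * (Nk k : ℕ))⁻¹ := by
          exact mul_le_mul_right (hAsm k).le _
      _ = ((2 : ℝ≥0∞) ^ k)⁻¹ := by
          rw [mul_comm ((2 : ℝ≥0∞) ^ k) ((Nk k : ℕ) : ℝ≥0∞),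
            ENNReal.mul_inv (Or.inl (hNk0 k)) (Or.inl (hNkt k)), ← mul_assoc,
            ENNReal.mul_inv_cancel (hNk0 k) (hNkt k), one_mul]
  have hμBk : ∀ k, (ck k : ℝ≥0∞) * μ (B k) ≤ ((2 : ℝ≥0∞) ^ k)⁻¹ := by
    intro k
    have h1 : μ (B k) ≤ (((Nk k : ℕ) : ℝ≥0∞))⁻¹ := by
      rw [ENNReal.le_inv_iff_mul_le, mul_comm]
      exact hBle k
    calc (ck k : ℝ≥0∞) * μ (B k) ≤ (ck k : ℝ≥0∞) * (((Nk k : ℕ) : ℝ≥0∞))⁻¹ :=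
          mul_le_mul_right h1 _
      _ = ((2 : ℝ≥0∞) ^ k)⁻¹ := by
          have hcast1 : ((ck k : ℕ) : ℝ≥0∞) = (2 : ℝ≥0∞) ^ (k * k - k) := by
            simp [hckdef]
          have hcast2 : ((Nk k : ℕ) : ℝ≥0∞) = (2 : ℝ≥0∞) ^ (k * k) := by
            simp [hNkdef]
          have hkkle : k ≤ k * k := by
            cases k with
            | zero => simp
            | succ p => exact Nat.le_mul_of_pos_left _ (Nat.succ_pos p)
          rw [hcast1, hcast2, (by rw [← pow_add]; congr 1; omega :
              (2 : ℝ≥0∞) ^ (k * k) = 2 ^ (k * k - k) * 2 ^ k),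
            ENNReal.mul_inv (Or.inl (by positivity)) (Or.inl (ENNReal.pow_ne_top (by norm_num))),
            ← mul_assoc, ENNReal.mul_inv_cancel (by positivity)
              (ENNReal.pow_ne_top (by norm_num)), one_mul]
  -- geometric sum
  have hgeom : ∑' k : ℕ, ((2 : ℝ≥0∞) ^ k)⁻¹ = 2 := by
    have : ∀ k : ℕ, ((2 : ℝ≥0∞) ^ k)⁻¹ = (2⁻¹ : ℝ≥0∞) ^ k := fun k =>
      ENNReal.inv_pow
    rw [tsum_congr this, ENNReal.tsum_geometric, ENNReal.one_sub_inv_two, inv_inv]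
  -- the function
  set H : X → ℝ≥0∞ := fun x => ∑' k : ℕ, Set.indicator (B k) (fun _ => (ck k : ℝ≥0∞)) x
    with hHdef
  have hHmeas : Measurable H :=
    Measurable.ennreal_tsum fun k => measurable_const.indicator (hBm k)
  have hlint : ∫⁻ x, H x ∂μ ≤ 2 := by
    rw [hHdef]
    rw [lintegral_tsum fun k => (measurable_const.indicator (hBm k)).aemeasurable]
    calc ∑' k : ℕ, ∫⁻ x, Set.indicator (B k) (fun _ => (ck k : ℝ≥0∞)) x ∂μ
        = ∑' k : ℕ, (ck k : ℝ≥0∞) * μ (B k) :=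
          tsum_congr fun k => lintegral_indicator_const (hBm k) _
      _ ≤ ∑' k : ℕ, ((2 : ℝ≥0∞) ^ k)⁻¹ := ENNReal.tsum_le_tsum hμBk
      _ = 2 := hgeom
  have hlint' : ∫⁻ x, H x ∂μ ≠ ⊤ := (hlint.trans_lt (by norm_num)).ne
  set h : X → ℝ := fun x => (H x).toReal with hhdef
  refine ⟨h, hHmeas.ennreal_toReal, fun x => ENNReal.toReal_nonneg, ?_, ?_⟩
  · exact integrable_toReal_of_lintegral_ne_top hHmeas.aemeasurable hlint'
  -- a.e. statements
  intro r hr0 hr1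
  have hZ : μ {x | H x = ⊤} = 0 := by
    have h1 := ae_lt_top hHmeas hlint'
    rw [ae_iff] at h1
    convert h1 using 2
    ext x
    simp [lt_top_iff_ne_top]
  have horb : ∀ᵐ x ∂μ, ∀ n : ℕ, H (θ^[n] x) ≠ ⊤ := by
    have hZm : MeasurableSet {x | H x = ⊤} := hHmeas (measurableSet_singleton ⊤)
    have h2 : μ (⋃ n : ℕ, (θ^[n]) ⁻¹' {x | H x = ⊤}) = 0 :=
      measure_iUnion_null fun n => by
        rw [(hθ.iterate n).measure_preimage hZm.nullMeasurableSet]; exact hZ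
    filter_upwards [measure_eq_zero_iff_ae_notMem.1 h2] with x hx n
    intro hc
    exact hx (mem_iUnion.2 ⟨n, hc⟩)
  have hBC : ∀ᵐ x ∂μ, ∀ᶠ k in atTop, x ∉ {x | ¬ ∃ n, 1 ≤ n ∧ n ≤ Nk k ∧ θ^[n] x ∈ B k} := by
    refine ae_eventually_notMem ?_
    refine ne_top_of_le_ne_top (by norm_num : (2 : ℝ≥0∞) ≠ ⊤) ?_
    exact (ENNReal.tsum_le_tsum hcov2).trans hgeom.le
  filter_upwards [hBC, horb] with x hx1 hx2
  obtain ⟨k₀, hk₀⟩ := eventually_atTop.1 hx1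
  -- pointwise lower bound at hitting times
  have hval : ∀ (k n : ℕ), (k : ℝ) * (1 - r) ≥ 2 → 1 ≤ n → n ≤ Nk k → θ^[n] x ∈ B k →
      (2 : ℝ) ^ k ≤ h (θ^[n] x) / (n : ℝ) ^ r := by
    intro k n hkr hn1 hnN hmem
    have hk1 : 1 ≤ k := by
      by_contra hc
      push_neg at hc
      have hk0 : k = 0 := by omega
      rw [hk0] at hkr
      norm_num at hkr
    have hhk : (ck k : ℝ) ≤ h (θ^[n] x) := by
      have hle : (ck k : ℝ≥0∞) ≤ H (θ^[n] x) := by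
        have h3 := ENNReal.le_tsum (f := fun j : ℕ =>
          Set.indicator (B j) (fun _ => (ck j : ℝ≥0∞)) (θ^[n] x)) k
        simpa [hHdef, Set.indicator_of_mem hmem] using h3
      have h4 := ENNReal.toReal_mono (hx2 n) hle
      simpa using h4
    have hnpos : (0 : ℝ) < (n : ℝ) := by exact_mod_cast hn1
    have hnr : (0 : ℝ) < (n : ℝ) ^ r := Real.rpow_pos_of_pos hnpos r
    have hNr : (n : ℝ) ^ r ≤ ((Nk k : ℕ) : ℝ) ^ r :=
      Real.rpow_le_rpow hnpos.le (by exact_mod_cast hnN) hr0.le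
    have hstep1 : (ck k : ℝ) / ((Nk k : ℕ) : ℝ) ^ r ≤ h (θ^[n] x) / (n : ℝ) ^ r :=
      div_le_div₀ ((Nat.cast_nonneg _).trans hhk) hhk hnr hNr
    refine le_trans ?_ hstep1
    -- key arithmetic: 2^k ≤ 2^(k²-k) / (2^(k²))^r
    have hkk : k ≤ k * k := Nat.le_mul_of_pos_left k (by omega)

    have e1 : ((ck k : ℕ) : ℝ) = (2 : ℝ) ^ (((k * k - k : ℕ) : ℝ)) := by
      rw [Real.rpow_natCast]
      simp [hckdef]
    have e2 : ((Nk k : ℕ) : ℝ) ^ r = (2 : ℝ) ^ (((k * k : ℕ) : ℝ) * r) := by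
      have : ((Nk k : ℕ) : ℝ) = (2 : ℝ) ^ (((k * k : ℕ) : ℝ)) := by
        rw [Real.rpow_natCast]
        simp [hNkdef]
      rw [this, ← Real.rpow_mul (by norm_num : (0:ℝ) ≤ 2)]
    have e3 : (2 : ℝ) ^ k = (2 : ℝ) ^ ((k : ℝ)) := (Real.rpow_natCast 2 k).symm
    rw [e1, e2, e3, ← Real.rpow_sub (by norm_num : (0:ℝ) < 2)]
    apply Real.rpow_le_rpow_of_exponent_le (by norm_num : (1:ℝ) ≤ 2)
    have hc1 : ((k * k - k : ℕ) : ℝ) = (k : ℝ) * k - k := by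
      push_cast [Nat.cast_sub hkk]
      ring
    rw [hc1]
    push_cast
    nlinarith [Nat.cast_nonneg (α := ℝ) k]
  -- conclude limsup = ⊤
  rw [eq_top_iff, ← ENNReal.iSup_natCast]
  refine iSup_le fun M => ?_
  refine le_limsup_of_frequently_le' (frequently_atTop.2 fun m => ?_)
  obtain ⟨Cb, hCb⟩ := Finset.exists_le
    ((Finset.range m).image fun n => h (θ^[n] x) / (n : ℝ) ^ r)
  set K : ℕ := max (max k₀ M) (max (⌈(2 : ℝ) / (1 - r)⌉₊) (⌈Cb⌉₊ + 1)) with hKdef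
  have hKr : (K : ℝ) * (1 - r) ≥ 2 := by
    have h5 : (⌈(2 : ℝ) / (1 - r)⌉₊ : ℝ) ≤ (K : ℝ) := by
      exact_mod_cast Nat.cast_le.2 ((le_max_left _ _).trans (le_max_right _ _))
    have h6 : (2 : ℝ) / (1 - r) ≤ (K : ℝ) := (Nat.le_ceil _).trans h5
    have h7 : (0 : ℝ) < 1 - r := by linarith
    calc (2 : ℝ) = (2 / (1 - r)) * (1 - r) := by field_simp
      _ ≤ (K : ℝ) * (1 - r) := by
          exact mul_le_mul_of_nonneg_right h6 h7.le
  obtain ⟨n, hn1, hnN, hmem⟩ : ∃ n, 1 ≤ n ∧ n ≤ Nk K ∧ θ^[n] x ∈ B K := by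
    have := hk₀ K ((le_max_left k₀ M).trans (le_max_left _ _))
    simpa [Set.mem_setOf_eq, not_not] using this
  have hv := hval K n hKr hn1 hnN hmem
  have hK2 : (K : ℝ) < (2 : ℝ) ^ K := by
    have := (Nat.lt_two_pow_self : K < 2 ^ K)
    exact_mod_cast this
  have hnm : n ≥ m := by
    by_contra hc
    push_neg at hc
    have h8 : h (θ^[n] x) / (n : ℝ) ^ r ≤ Cb :=
      hCb _ (Finset.mem_image.2 ⟨n, Finset.mem_range.2 hc, rfl⟩)
    have h9 : (Cb : ℝ) < (K : ℝ) := by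
      have h10 : (⌈Cb⌉₊ + 1 : ℕ) ≤ K := (le_max_right _ _).trans (le_max_right _ _)
      have h11 : (⌈Cb⌉₊ : ℝ) + 1 ≤ (K : ℝ) := by exact_mod_cast h10
      have := Nat.le_ceil Cb
      linarith
    linarith
  refine ⟨n, hnm, ?_⟩
  have hMK : (M : ℝ) ≤ (2 : ℝ) ^ K := by
    have h12 : (M : ℝ) ≤ (K : ℝ) := by
      exact_mod_cast (le_max_right k₀ M).trans (le_max_left _ _)
    linarith
  calc ((M : ℕ) : ℝ≥0∞) = ENNReal.ofReal ((M : ℕ) : ℝ) := by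
        rw [ENNReal.ofReal_natCast]
    _ ≤ ENNReal.ofReal (h (θ^[n] x) / (n : ℝ) ^ r) := by
        exact ENNReal.ofReal_le_ofReal (hMK.trans hv)
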